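/- arXiv:2603.14962 — 3 statements merged into one kernel-verified Lean document; each statement's English description precedes it below -/
import Mathlib

section
/- Let H be a κ-regular graph on n vertices with adjacency eigenvalues κ = λ₁ ≥ λ₂ ≥ ... ≥ λₙ, and let G be a connected graph on m ≥ 2 vertices. Then for every j ∈ {2,...,n}, the number −2−λⱼ is an eigenvalue of the distance matrix D of the corona graph G⊙H. -/
open Matrix BigOperators

/-- The join `K₁ + H` of a single vertex (labelled `none`) with `H`. -/
def joinOne {V₂ : Type*} (H : SimpleGraph V₂) : SimpleGraph (Option V₂) where
  Adj i j := (∃ a b, i = some a ∧ j = some b ∧ H.Adj a b) ∨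
    (i = none ∧ j ≠ none) ∨ (i ≠ none ∧ j = none)
  symm := by
    constructor
    rintro i j (⟨a, b, ha, hb, hab⟩ | ⟨h1, h2⟩ | ⟨h1, h2⟩)
    · exact Or.inl ⟨b, a, hb, ha, hab.symm⟩
    · exact Or.inr (Or.inr ⟨h2, h1⟩)
    · exact Or.inr (Or.inl ⟨h2, h1⟩)
  loopless := by
    constructor
    rintro i (⟨a, b, ha, hb, hab⟩ | ⟨h1, h2⟩ | ⟨h1, h2⟩)
    · rw [ha] at hb; injection hb with h; subst h; exact H.irrefl hab
    · exact h2 h1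
    · exact h1 h2

/-- The corona graph `G ⊙ H`, on vertex set `V₁ × ({o} ∪ V₂)` with `o = none`. -/
def corona {V₁ V₂ : Type*} (G : SimpleGraph V₁) (H : SimpleGraph V₂) :
    SimpleGraph (V₁ × Option V₂) where
  Adj p q := (p.2 = none ∧ q.2 = none ∧ G.Adj p.1 q.1) ∨
    (p.1 = q.1 ∧ (joinOne H).Adj p.2 q.2)
  symm := by
    constructor
    rintro p q (⟨h1, h2, h3⟩ | ⟨h1, h2⟩)
    · exact Or.inl ⟨h2, h1, h3.symm⟩
    · exact Or.inr ⟨h1.symm, h2.symm⟩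
  loopless := by
    constructor
    rintro p (⟨_, _, h⟩ | ⟨_, h⟩)
    · exact G.irrefl h
    · exact (joinOne H).irrefl h

/-- The distance matrix of a graph, with real entries. -/
noncomputable def distMatrix {V : Type*} (G : SimpleGraph V) : Matrix V V ℝ :=
  fun x y => (G.dist x y : ℝ)

section Aux

variable {V₁ V₂ : Type*} (G : SimpleGraph V₁) (H : SimpleGraph V₂)

/-- The hub embedding `G →g corona G H`. -/
def hubHom : G →g corona G H where
  toFun y := (y, none)
  map_rel' h := Or.inl ⟨rfl, rfl, h⟩

lemma adj_hub_leaf (y : V₁) (i : V₂) : (corona G H).Adj (y, none) (y, some i) :=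
  Or.inr ⟨rfl, Or.inr (Or.inl ⟨rfl, by simp⟩)⟩

lemma adj_leaf_leaf {i j : V₂} (y : V₁) (h : H.Adj i j) :
    (corona G H).Adj (y, some i) (y, some j) :=
  Or.inr ⟨rfl, Or.inl ⟨i, j, rfl, rfl, h⟩⟩

variable [DecidableEq V₂] [DecidableRel H.Adj]

open scoped Classical in
/-- Potential function: distance to the leaf `(z, some i)`. -/
noncomputable def phi (z : V₁) (i : V₂) : V₁ × Option V₂ → ℕ := fun p =>
  if p.1 = z then
    (match p.2 with
     | none => 1
     | some i' => if i' = i then 0 else if H.Adj i' i then 1 else 2)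
  else G.dist p.1 z + 1 + (if p.2 = none then 0 else 1)

lemma phi_hub (hG : G.Connected) (z : V₁) (i : V₂) (y : V₁) :
    phi G H z i (y, none) = G.dist y z + 1 := by
  unfold phi
  by_cases h : y = z
  · subst h; simp
  · simp [h]

lemma phi_leaf_ne (z : V₁) (i : V₂) {y : V₁} (h : y ≠ z) (j : V₂) :
    phi G H z i (y, some j) = G.dist y z + 2 := by
  simp [phi, h]

lemma phi_leaf_same (z : V₁) (i j : V₂) :
    phi G H z i (z, some j) =
      if j = i then 0 else if H.Adj j i then 1 else 2 := by
  simp [phi]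

lemma phi_target (z : V₁) (i : V₂) : phi G H z i (z, some i) = 0 := by
  simp [phi]

lemma phi_lipschitz (hG : G.Connected) (z : V₁) (i : V₂) {p q : V₁ × Option V₂}
    (h : (corona G H).Adj p q) : phi G H z i p ≤ phi G H z i q + 1 := by
  obtain ⟨y, a⟩ := p
  obtain ⟨w, b⟩ := q
  rcases h with ⟨ha, hb, hadj⟩ | ⟨heq, hj⟩
  · -- hub-hub edge
    simp only at ha hb; subst ha; subst hb
    rw [phi_hub G H hG, phi_hub G H hG]
    have h1 : G.dist y w = 1 := SimpleGraph.dist_eq_one_iff_adj.mpr hadj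
    have h2 : G.dist y z ≤ G.dist y w + G.dist w z := hG.dist_triangle
    omega
  · -- same-copy edge
    simp only at heq; subst heq
    rcases hj with ⟨c, d, hc, hd, hcd⟩ | ⟨h1, h2⟩ | ⟨h1, h2⟩
    · -- leaf-leaf
      subst hc; subst hd
      by_cases hy : y = z
      · subst hy
        rw [phi_leaf_same, phi_leaf_same]
        by_cases h1 : c = i
        · simp only [if_pos h1]; omega
        by_cases h2 : d = i
        · subst h2
          simp only [if_neg h1, if_pos rfl, if_pos hcd]
          omega
        · have hL : (if c = i then 0 else if H.Adj c i then (1:ℕ) else 2) ≤ 2 := by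
            split_ifs <;> omega
          have hR : 1 ≤ (if d = i then 0 else if H.Adj d i then (1:ℕ) else 2) := by
            simp only [if_neg h2]; split_ifs <;> omega
          omega
      · have ha := phi_leaf_ne G H z i hy c
        have hb := phi_leaf_ne G H z i hy d
        omega
    · -- none-some
      subst h1
      obtain ⟨d, rfl⟩ := Option.ne_none_iff_exists'.mp h2
      rw [phi_hub G H hG]
      by_cases hy : y = z
      · subst hy
        rw [phi_leaf_same]
        simp only [SimpleGraph.dist_self]
        omega
      · have hb := phi_leaf_ne G H z i hy d
        omega
    · -- some-none
      subst h2
      obtain ⟨c, rfl⟩ := Option.ne_none_iff_exists'.mp h1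
      rw [phi_hub G H hG]
      by_cases hy : y = z
      · subst hy
        rw [phi_leaf_same]
        simp only [SimpleGraph.dist_self]
        split_ifs <;> omega
      · have ha := phi_leaf_ne G H z i hy c
        omega

lemma phi_le_of_walk (hG : G.Connected) (z : V₁) (i : V₂) {p q : V₁ × Option V₂}
    (w : (corona G H).Walk p q) : phi G H z i p ≤ phi G H z i q + w.length := by
  induction w with
  | nil => simp
  | cons h w ih =>
      have h1 := phi_lipschitz G H hG z i h
      rw [SimpleGraph.Walk.length_cons]
      omega

/-- A hub walk of length `G.dist y z`. -/
lemma exists_hub_walk (hG : G.Connected) (y z : V₁) :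
    ∃ w : (corona G H).Walk (y, none) (z, none), w.length = G.dist y z := by
  obtain ⟨p, hp⟩ := hG.exists_walk_length_eq_dist y z
  exact ⟨p.map (hubHom G H), (SimpleGraph.Walk.length_map (hubHom G H) p).trans hp⟩

/-- Distance from a hub vertex to a leaf. -/
lemma dist_hub_leaf (hG : G.Connected) (y z : V₁) (i : V₂) :
    (corona G H).dist (y, none) (z, some i) = G.dist y z + 1 := by
  obtain ⟨w, hw⟩ := exists_hub_walk G H hG y z
  have hub : (corona G H).dist (y, none) (z, some i) ≤ G.dist y z + 1 := by
    have h2 := SimpleGraph.dist_le (w.concat (adj_hub_leaf G H z i))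
    rwa [SimpleGraph.Walk.length_concat, hw] at h2
  have hreach : (corona G H).Reachable (y, none) (z, some i) :=
    ⟨w.concat (adj_hub_leaf G H z i)⟩
  obtain ⟨p, hp⟩ := hreach.exists_walk_length_eq_dist
  have hlb := phi_le_of_walk G H hG z i p
  rw [phi_hub G H hG, phi_target] at hlb
  omega

/-- Distance between leaves in different copies. -/
lemma dist_leaf_leaf_ne (hG : G.Connected) {y z : V₁} (hyz : y ≠ z) (j i : V₂) :
    (corona G H).dist (y, some j) (z, some i) = G.dist y z + 2 := by
  obtain ⟨w, hw⟩ := exists_hub_walk G H hG y z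
  have hub : (corona G H).dist (y, some j) (z, some i) ≤ G.dist y z + 2 := by
    have h2 := SimpleGraph.dist_le
      (SimpleGraph.Walk.cons ((adj_hub_leaf G H y j).symm) (w.concat (adj_hub_leaf G H z i)))
    rw [SimpleGraph.Walk.length_cons, SimpleGraph.Walk.length_concat, hw] at h2
    omega
  have hreach : (corona G H).Reachable (y, some j) (z, some i) :=
    ⟨SimpleGraph.Walk.cons ((adj_hub_leaf G H y j).symm) (w.concat (adj_hub_leaf G H z i))⟩
  obtain ⟨p, hp⟩ := hreach.exists_walk_length_eq_dist
  have hlb := phi_le_of_walk G H hG z i p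
  rw [phi_leaf_ne G H z i hyz, phi_target] at hlb
  omega

/-- Distance between leaves in the same copy. -/
lemma dist_leaf_leaf_same (hG : G.Connected) (y : V₁) (j i : V₂) :
    (corona G H).dist (y, some j) (y, some i) =
      if j = i then 0 else if H.Adj j i then 1 else 2 := by
  by_cases hji : j = i
  · simp [hji]
  by_cases hadj : H.Adj j i
  · simp only [hji, if_false, hadj, if_true]
    exact SimpleGraph.dist_eq_one_iff_adj.mpr (adj_leaf_leaf G H y hadj)
  have hub : (corona G H).dist (y, some j) (y, some i) ≤ 2 := by
    have h2 := SimpleGraph.dist_le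
      (SimpleGraph.Walk.cons ((adj_hub_leaf G H y j).symm) ((adj_hub_leaf G H y i).toWalk))
    simpa using h2
  have hreach : (corona G H).Reachable (y, some j) (y, some i) :=
    ⟨SimpleGraph.Walk.cons ((adj_hub_leaf G H y j).symm) ((adj_hub_leaf G H y i).toWalk)⟩
  obtain ⟨p, hp⟩ := hreach.exists_walk_length_eq_dist
  have hlb := phi_le_of_walk G H hG y i p
  rw [phi_leaf_same, phi_target] at hlb
  simp only [if_neg hji, if_neg hadj] at hlb
  simp only [if_neg hji, if_neg hadj]
  omega

end Aux

/-- For `H` a `κ`-regular graph and `G` connected on `m ≥ 2` vertices,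
every adjacency eigenvalue `θ ≠ κ` of `H` (i.e. `θ = λⱼ` with `j ≥ 2`) yields an
eigenvalue `−2−θ` of the distance matrix of the corona graph `G ⊙ H`. -/
theorem corona_distMatrix_eigenvalue_from_H {V₁ V₂ : Type*} [Fintype V₁] [Fintype V₂]
    [DecidableEq V₂]
    (G : SimpleGraph V₁) (hG : G.Connected) (hm : 2 ≤ Fintype.card V₁)
    (H : SimpleGraph V₂) [DecidableRel H.Adj] (κ : ℕ) (hreg : H.IsRegularOfDegree κ)
    (θ : ℝ) (hθ : θ ≠ (κ : ℝ))
    (hev : ∃ x : V₂ → ℝ, x ≠ 0 ∧ (H.adjMatrix ℝ).mulVec x = θ • x) :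
    ∃ f : V₁ × Option V₂ → ℝ, f ≠ 0 ∧
      (distMatrix (corona G H)).mulVec f = (-2 - θ) • f := by
  classical
  obtain ⟨x, hx0, hx⟩ := hev
  -- the entries of x sum to 0
  have hsum : ∑ i, x i = 0 := by
    have h1 : (fun _ => (1:ℝ)) ⬝ᵥ ((H.adjMatrix ℝ) *ᵥ x) = θ * ∑ i, x i := by
      rw [hx]; simp [dotProduct, Finset.mul_sum]
    have h2 : (fun _ => (1:ℝ)) ⬝ᵥ ((H.adjMatrix ℝ) *ᵥ x) = (κ:ℝ) * ∑ i, x i := by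
      rw [Matrix.dotProduct_mulVec]
      have hv : ((fun _ => (1:ℝ)) ᵥ* H.adjMatrix ℝ) = fun _ => (κ:ℝ) := by
        funext v
        rw [SimpleGraph.adjMatrix_vecMul_apply, Finset.sum_const, nsmul_eq_mul, mul_one]
        exact_mod_cast congrArg (Nat.cast : ℕ → ℝ) (hreg v)
      rw [hv]; simp [dotProduct, Finset.mul_sum]
    have h3 : ((κ:ℝ) - θ) * ∑ i, x i = 0 := by
      rw [sub_mul, ← h1, ← h2]; ring
    rcases mul_eq_zero.mp h3 with h | h
    · exact absurd (sub_eq_zero.mp h).symm hθ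
    · exact h
  -- the eigenvector on the corona
  set f : V₁ × Option V₂ → ℝ := fun p => p.2.elim 0 x with hf
  have hfnone : ∀ y : V₁, f (y, none) = 0 := fun y => rfl
  have hfsome : ∀ (y : V₁) (i : V₂), f (y, some i) = x i := fun y i => rfl
  refine ⟨f, ?_, ?_⟩
  · -- f ≠ 0
    obtain ⟨i, hi⟩ := Function.ne_iff.mp hx0
    have : Nonempty V₁ := Fintype.card_pos_iff.mp (by omega)
    obtain ⟨y⟩ := this
    intro h
    exact hi (by simpa [hfsome] using congrFun h (y, some i))
  · funext p
    obtain ⟨y, a⟩ := p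
    have expand : (distMatrix (corona G H) *ᵥ f) (y, a) =
        ∑ z : V₁, (((corona G H).dist (y, a) (z, none) : ℝ) * f (z, none) +
          ∑ i : V₂, ((corona G H).dist (y, a) (z, some i) : ℝ) * x i) := by
      rw [Matrix.mulVec, dotProduct, Fintype.sum_prod_type]
      refine Finset.sum_congr rfl fun z _ => ?_
      rw [Fintype.sum_option]
      simp [distMatrix, hfsome]
    match a with
    | none =>
      rw [expand]
      have : ∀ z : V₁, (((corona G H).dist ((y : V₁), (none : Option V₂)) (z, none) : ℝ) * f (z, none) +
          ∑ i : V₂, ((corona G H).dist ((y : V₁), (none : Option V₂)) (z, some i) : ℝ) * x i) = 0 := by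
        intro z
        rw [hfnone, mul_zero, zero_add]
        have hc : ∀ i : V₂, (((corona G H).dist ((y : V₁), (none : Option V₂)) (z, some i) : ℝ))
            = (G.dist y z : ℝ) + 1 := by
          intro i
          rw [dist_hub_leaf G H hG]
          push_cast
          ring
        calc ∑ i : V₂, ((corona G H).dist ((y:V₁), (none : Option V₂)) (z, some i) : ℝ) * x i
            = ∑ i : V₂, ((G.dist y z : ℝ) + 1) * x i := by
              exact Finset.sum_congr rfl fun i _ => by rw [hc i]
          _ = ((G.dist y z : ℝ) + 1) * ∑ i, x i := by rw [Finset.mul_sum]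
          _ = 0 := by rw [hsum, mul_zero]
      rw [Finset.sum_congr rfl fun z _ => this z]
      simp [hfnone]
    | some j =>
      rw [expand]
      have hzero : ∀ z : V₁, z ≠ y →
          (((corona G H).dist ((y : V₁), some j) (z, none) : ℝ) * f (z, none) +
          ∑ i : V₂, ((corona G H).dist ((y : V₁), some j) (z, some i) : ℝ) * x i) = 0 := by
        intro z hz
        rw [hfnone, mul_zero, zero_add]
        have hc : ∀ i : V₂, (((corona G H).dist ((y : V₁), some j) (z, some i) : ℝ))
            = (G.dist y z : ℝ) + 2 := by
          intro i
          rw [dist_leaf_leaf_ne G H hG (Ne.symm hz)]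
          push_cast
          ring
        calc ∑ i : V₂, ((corona G H).dist ((y:V₁), some j) (z, some i) : ℝ) * x i
            = ∑ i : V₂, ((G.dist y z : ℝ) + 2) * x i := by
              exact Finset.sum_congr rfl fun i _ => by rw [hc i]
          _ = ((G.dist y z : ℝ) + 2) * ∑ i, x i := by rw [Finset.mul_sum]
          _ = 0 := by rw [hsum, mul_zero]
      rw [Fintype.sum_eq_single y hzero]
      rw [hfnone, mul_zero, zero_add]
      -- the diagonal-copy term
      have hc : ∀ i : V₂, (((corona G H).dist ((y : V₁), some j) (y, some i) : ℝ))
          = 2 - (if j = i then (2:ℝ) else 0) - (if H.Adj j i then (1:ℝ) else 0) := by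
        intro i
        rw [dist_leaf_leaf_same G H hG]
        by_cases h1 : j = i
        · subst h1; simp [H.irrefl]
        · by_cases h2 : H.Adj j i <;> simp [h1, h2] <;> norm_num
      have hAx : ∑ i, (if H.Adj j i then (1:ℝ) else 0) * x i = θ * x j := by
        have h := congrFun hx j
        simpa [Matrix.mulVec, dotProduct, SimpleGraph.adjMatrix_apply] using h
      have hdelta : ∑ i, (if j = i then (2:ℝ) else 0) * x i = 2 * x j := by
        simp [ite_mul, Finset.sum_ite_eq]
      calc ∑ i : V₂, ((corona G H).dist ((y:V₁), some j) (y, some i) : ℝ) * x i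
          = ∑ i : V₂, (2 - (if j = i then (2:ℝ) else 0) - (if H.Adj j i then (1:ℝ) else 0)) * x i := by
            exact Finset.sum_congr rfl fun i _ => by rw [hc i]
        _ = ∑ i : V₂, (2 * x i - (if j = i then (2:ℝ) else 0) * x i -
              (if H.Adj j i then (1:ℝ) else 0) * x i) := by
            exact Finset.sum_congr rfl fun i _ => by ring
        _ = 2 * ∑ i, x i - (∑ i, (if j = i then (2:ℝ) else 0) * x i) -
              ∑ i, (if H.Adj j i then (1:ℝ) else 0) * x i := by
            rw [Finset.sum_sub_distrib, Finset.sum_sub_distrib, Finset.mul_sum]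
        _ = 2 * 0 - 2 * x j - θ * x j := by rw [hsum, hdelta, hAx]
        _ = (-2 - θ) * f ((y : V₁), some j) := by rw [hfsome]; ring
end

section
/- Let G be a connected graph on m ≥ 2 vertices with QEC(G) = 0, or let H be a graph with −2 ∈ ev(A_H). Then λ = 0 belongs to λ(𝒮), i.e., there exist f with ⟨1,f⟩=0, ⟨f,f⟩=1, and μ ∈ ℝ such that D f = (μ/2)1, where D is the distance matrix of G⊙H. -/
open Matrix BigOperators

/-- The quadratic embedding constant of a graph:
`QEC(G) = max {⟨f, D f⟩ : ⟨f,f⟩ = 1, ⟨1,f⟩ = 0}`. -/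
noncomputable def QEC {V : Type*} [Fintype V] (G : SimpleGraph V) : ℝ :=
  sSup {r : ℝ | ∃ f : V → ℝ, (∑ x, f x * f x) = 1 ∧ (∑ x, f x) = 0 ∧
    r = f ⬝ᵥ (distMatrix G).mulVec f}

namespace CoronaAux
open SimpleGraph

lemma pot_le {V : Type*} {C : SimpleGraph V} (σ : V → ℕ)
    (hσ : ∀ p q, C.Adj p q → σ p ≤ σ q + 1) {p q : V} (W : C.Walk p q) :
    σ p ≤ σ q + W.length := by
  induction W with
  | nil => simp
  | @cons u v w h W ih =>
      have h1 := hσ u v h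
      simp only [SimpleGraph.Walk.length_cons]
      omega

variable {V₁ V₂ : Type*} (G : SimpleGraph V₁) (H : SimpleGraph V₂)

lemma adj_nn {y z : V₁} (h : G.Adj y z) : (corona G H).Adj (y, none) (z, none) :=
  Or.inl ⟨rfl, rfl, h⟩

lemma adj_sn (y : V₁) (i : V₂) : (corona G H).Adj (y, some i) (y, none) :=
  Or.inr ⟨rfl, Or.inr (Or.inr ⟨Option.some_ne_none i, rfl⟩)⟩

lemma adj_ns (y : V₁) (i : V₂) : (corona G H).Adj (y, none) (y, some i) :=
  ((adj_sn G H y i).symm)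

lemma adj_ss {i j : V₂} (y : V₁) (h : H.Adj i j) :
    (corona G H).Adj (y, some i) (y, some j) :=
  Or.inr ⟨rfl, Or.inl ⟨i, j, rfl, rfl, h⟩⟩

def homG : G →g corona G H where
  toFun := fun y => (y, none)
  map_rel' := fun h => Or.inl ⟨rfl, rfl, h⟩

variable {G}

lemma dist_step (hG : G.Connected) {a b : V₁} (z : V₁) (h : G.Adj a b) :
    G.dist a z ≤ G.dist b z + 1 := by
  obtain ⟨W, hW⟩ := hG.exists_walk_length_eq_dist b z
  have h2 := SimpleGraph.dist_le (SimpleGraph.Walk.cons h W)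
  simp only [SimpleGraph.Walk.length_cons, hW] at h2
  exact h2

lemma corona_reach (hG : G.Connected) (p q : V₁ × Option V₂) :
    (corona G H).Reachable p q := by
  obtain ⟨y, w⟩ := p
  obtain ⟨z, u⟩ := q
  have r1 : (corona G H).Reachable (y, w) (y, none) := by
    cases w with
    | none => exact Reachable.refl _
    | some i => exact (adj_sn G H y i).reachable
  have r3 : (corona G H).Reachable (z, none) (z, u) := by
    cases u with
    | none => exact Reachable.refl _
    | some i => exact (adj_ns G H z i).reachable
  have r2 : (corona G H).Reachable (y, none) (z, none) :=
    (hG.preconnected y z).map (homG G H)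
  exact (r1.trans r2).trans r3

/-- potential for target `(z, none)` -/
noncomputable def sig1 (G : SimpleGraph V₁) (z : V₁) : V₁ × Option V₂ → ℕ :=
  fun p => G.dist p.1 z + p.2.elim 0 fun _ => 1

lemma sig1_lip (hG : G.Connected) (z : V₁) :
    ∀ p q : V₁ × Option V₂, (corona G H).Adj p q →
      sig1 G z p ≤ sig1 G z q + 1 := by
  rintro ⟨a, w⟩ ⟨b, u⟩ (⟨h1, h2, h3⟩ | ⟨h1, h2⟩)
  · simp only at h1 h2
    subst h1; subst h2
    have := dist_step hG z h3
    simpa [sig1] using this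
  · simp only at h1
    subst h1
    simp only [sig1]
    cases w <;> cases u <;> simp <;> omega

-- upper bound walks
lemma walk_nn (hG : G.Connected) (y z : V₁) :
    ∃ W : (corona G H).Walk (y, none) (z, none), W.length = G.dist y z := by
  obtain ⟨W, hW⟩ := hG.exists_walk_length_eq_dist y z
  exact ⟨W.map (homG G H), (SimpleGraph.Walk.length_map _ _).trans hW⟩

lemma dist_nn (hG : G.Connected) (y z : V₁) :
    (corona G H).dist (y, none) (z, none) = G.dist y z := by
  apply le_antisymm
  · obtain ⟨W, hW⟩ := walk_nn H hG y z
    simpa [hW] using SimpleGraph.dist_le W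
  · obtain ⟨W, hW⟩ := ((corona_reach H hG (y, none) (z, none))).exists_walk_length_eq_dist
    have := pot_le (sig1 G z) (sig1_lip H hG z) W
    simpa [hW, sig1, SimpleGraph.dist_self] using this

lemma dist_sn (hG : G.Connected) (y z : V₁) (i : V₂) :
    (corona G H).dist (y, some i) (z, none) = G.dist y z + 1 := by
  apply le_antisymm
  · obtain ⟨W, hW⟩ := walk_nn H hG y z
    have := SimpleGraph.dist_le (SimpleGraph.Walk.cons (adj_sn G H y i) W)
    simp only [SimpleGraph.Walk.length_cons, hW] at this
    omega
  · obtain ⟨W, hW⟩ := ((corona_reach H hG (y, some i) (z, none))).exists_walk_length_eq_dist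
    have := pot_le (sig1 G z) (sig1_lip H hG z) W
    simpa [hW, sig1, SimpleGraph.dist_self] using this

lemma dist_ns (hG : G.Connected) (y z : V₁) (j : V₂) :
    (corona G H).dist (y, none) (z, some j) = G.dist y z + 1 := by
  rw [SimpleGraph.dist_comm, dist_sn H hG, SimpleGraph.dist_comm]

variable [DecidableEq V₂] [DecidableRel H.Adj]

/-- potential for target `(z, some j)` -/
noncomputable def sig2 (G : SimpleGraph V₁) [DecidableEq V₁] (z : V₁) (j : V₂) :
    V₁ × Option V₂ → ℕ :=
  fun p => p.2.elim (G.dist p.1 z + 1)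
    (fun i => if p.1 = z then (if i = j then 0 else if H.Adj i j then 1 else 2)
      else G.dist p.1 z + 2)

lemma sig2_lip [DecidableEq V₁] (hG : G.Connected) (z : V₁) (j : V₂) :
    ∀ p q : V₁ × Option V₂, (corona G H).Adj p q →
      sig2 H G z j p ≤ sig2 H G z j q + 1 := by
  rintro ⟨a, w⟩ ⟨b, u⟩ (⟨h1, h2, h3⟩ | ⟨h1, h2⟩)
  · simp only at h1 h2
    subst h1; subst h2
    have := dist_step hG z h3
    simpa [sig2] using this
  · simp only at h1 h2
    subst h1
    rcases h2 with ⟨i', j', hwi, huj, hH⟩ | ⟨hwn, hun⟩ | ⟨hwn, hun⟩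
    · subst hwi; subst huj
      simp only [sig2, Option.elim_some]
      by_cases haz : a = z
      · subst haz
        by_cases h1 : i' = j
        · simp [h1]
        · by_cases h2' : j' = j
          · subst h2'
            simp [h1, hH]
          · by_cases h3' : H.Adj i' j <;> by_cases h4' : H.Adj j' j <;>
              simp [h1, h2', h3', h4']
      · simp [haz]
    · -- w = none, u ≠ none
      subst hwn
      cases u with
      | none => exact absurd rfl hun
      | some j' =>
        simp only [sig2, Option.elim_none, Option.elim_some]
        by_cases haz : a = z
        · subst haz
          simp only [if_pos rfl, SimpleGraph.dist_self]
          split_ifs <;> omega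
        · simp [haz]
    · -- w ≠ none, u = none
      subst hun
      cases w with
      | none => exact absurd rfl hwn
      | some i' =>
        simp only [sig2, Option.elim_none, Option.elim_some]
        by_cases haz : a = z
        · subst haz
          simp only [if_pos rfl, SimpleGraph.dist_self]
          split_ifs <;> omega
        · simp [haz]

lemma dist_ss_ne (hG : G.Connected) {y z : V₁} (hyz : y ≠ z) (i j : V₂) :
    (corona G H).dist (y, some i) (z, some j) = G.dist y z + 2 := by
  classical
  apply le_antisymm
  · obtain ⟨W, hW⟩ := walk_nn H hG y z
    have := SimpleGraph.dist_le
      ((SimpleGraph.Walk.cons (adj_sn G H y i) W).concat (adj_ns G H z j))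
    simp only [SimpleGraph.Walk.length_concat, SimpleGraph.Walk.length_cons, hW] at this
    omega
  · obtain ⟨W, hW⟩ := ((corona_reach H hG (y, some i) (z, some j))).exists_walk_length_eq_dist
    have := pot_le (sig2 H G z j) (sig2_lip H hG z j) W
    simpa [hW, sig2, hyz] using this

lemma dist_ss_eq (hG : G.Connected) (y : V₁) (i j : V₂) :
    (corona G H).dist (y, some i) (y, some j) =
      if i = j then 0 else if H.Adj i j then 1 else 2 := by
  by_cases hij : i = j
  · subst hij; simp [SimpleGraph.dist_self]
  · by_cases hadj : H.Adj i j
    · simp only [hij, if_false, hadj, if_true]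
      exact SimpleGraph.dist_eq_one_iff_adj.mpr (adj_ss G H y hadj)
    · simp only [hij, if_false, hadj]
      apply le_antisymm
      · have := SimpleGraph.dist_le
          (SimpleGraph.Walk.cons (adj_sn G H y i)
            (SimpleGraph.Walk.cons (adj_ns G H y j) SimpleGraph.Walk.nil))
        simpa using this
      · have hne : ((y, some i) : V₁ × Option V₂) ≠ (y, some j) := by simp [hij]
        have hr := corona_reach H hG (y, some i) (y, some j)
        have h0 : (corona G H).dist (y, some i) (y, some j) ≠ 0 := fun hc =>
          hne (hr.dist_eq_zero_iff.mp hc)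
        have h1 : (corona G H).dist (y, some i) (y, some j) ≠ 1 := by
          intro hc
          have hadj2 := SimpleGraph.dist_eq_one_iff_adj.mp hc
          rcases hadj2 with ⟨ha, _, _⟩ | ⟨_, hb⟩
          · simp at ha
          · rcases hb with ⟨a', b', ha', hb', hab'⟩ | ⟨ha', _⟩ | ⟨_, hb'⟩
            · simp only [Option.some.injEq] at ha' hb'
              subst ha'; subst hb'
              exact hadj hab'
            · simp at ha'
            · simp at hb'
        omega



lemma distMatrix_symm_apply {V : Type*} (G : SimpleGraph V) (x y : V) :
    distMatrix G y x = distMatrix G x y := by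
  simp [distMatrix, SimpleGraph.dist_comm]

lemma dot_symm {V : Type*} [Fintype V] (G : SimpleGraph V) (u w : V → ℝ) :
    u ⬝ᵥ (distMatrix G).mulVec w = w ⬝ᵥ (distMatrix G).mulVec u := by
  simp only [dotProduct, Matrix.mulVec, Finset.mul_sum]
  rw [Finset.sum_comm]
  refine Finset.sum_congr rfl fun x _ => Finset.sum_congr rfl fun y _ => ?_
  rw [distMatrix_symm_apply G x y]
  ring

lemma exists_const_row {V : Type*} [Fintype V] (G : SimpleGraph V)
    (hm : 2 ≤ Fintype.card V) (hQ : QEC G = 0) :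
    ∃ (g : V → ℝ) (c : ℝ), (∑ x, g x * g x) = 1 ∧ (∑ x, g x) = 0 ∧
      ∀ y, ((distMatrix G).mulVec g) y = c := by
  classical
  set D := distMatrix G with hD
  set K : Set (V → ℝ) := {f | (∑ x, f x * f x) = 1 ∧ (∑ x, f x) = 0} with hK
  -- K is nonempty
  obtain ⟨a, b, hab⟩ := Fintype.exists_pair_of_one_lt_card (by omega : 1 < Fintype.card V)
  have key : ∀ c d : ℝ, ∑ v, (if v = a then c else if v = b then d else 0) = c + d := by
    intro c d
    have he : ∀ v : V, (if v = a then c else if v = b then d else 0)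
        = (if v = a then c else 0) + (if v = b then d else 0) := by
      intro v
      by_cases h1 : v = a
      · subst h1; simp [hab]
      · simp [h1]
    simp [he, Finset.sum_add_distrib, Finset.sum_ite_eq']
  set s : ℝ := Real.sqrt (1/2) with hs
  have hs2 : s * s = 1/2 := Real.mul_self_sqrt (by norm_num)
  have hKne : K.Nonempty := by
    refine ⟨fun v => if v = a then s else if v = b then -s else 0, ?_, ?_⟩
    · show (∑ v, _) = 1
      have he : ∀ v : V, (if v = a then s else if v = b then -s else 0) *
          (if v = a then s else if v = b then -s else 0)
          = (if v = a then s * s else if v = b then s * s else 0) := by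
        intro v; split_ifs <;> ring
      rw [Finset.sum_congr rfl fun v _ => he v, key]
      rw [hs2]; norm_num
    · show (∑ v, _) = 0
      rw [key]; ring
  -- K is compact
  have hc1 : Continuous fun f : V → ℝ => ∑ x, f x * f x :=
    continuous_finset_sum _ fun x _ => (continuous_apply x).mul (continuous_apply x)
  have hc2 : Continuous fun f : V → ℝ => ∑ x, f x :=
    continuous_finset_sum _ fun x _ => continuous_apply x
  have hKclosed : IsClosed K := by
    rw [hK, Set.setOf_and]
    exact (isClosed_eq hc1 continuous_const).inter (isClosed_eq hc2 continuous_const)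
  have hKsub : K ⊆ Metric.closedBall 0 1 := by
    intro f hf
    rw [Metric.mem_closedBall, dist_zero_right]
    rw [pi_norm_le_iff_of_nonneg zero_le_one]
    intro x
    rw [Real.norm_eq_abs, abs_le_one_iff_mul_self_le_one]
    have h1 := Finset.single_le_sum (f := fun x => f x * f x)
      (fun i _ => mul_self_nonneg (f i)) (Finset.mem_univ x)
    rw [hf.1] at h1
    exact h1
  have hKc : IsCompact K :=
    (isCompact_closedBall (0 : V → ℝ) 1).of_isClosed_subset hKclosed hKsub
  -- the quadratic form is continuous
  have hφ : Continuous fun f : V → ℝ => f ⬝ᵥ D.mulVec f := by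
    simp only [dotProduct, Matrix.mulVec]
    exact continuous_finset_sum _ fun x _ => (continuous_apply x).mul
      (continuous_finset_sum _ fun y _ => continuous_const.mul (continuous_apply y))
  obtain ⟨g, hgK, hgmax⟩ := hKc.exists_isMaxOn hKne hφ.continuousOn
  have hgr : IsGreatest {r : ℝ | ∃ f : V → ℝ, (∑ x, f x * f x) = 1 ∧ (∑ x, f x) = 0 ∧
      r = f ⬝ᵥ (distMatrix G).mulVec f} (g ⬝ᵥ D.mulVec g) := by
    constructor
    · exact ⟨g, hgK.1, hgK.2, rfl⟩
    · rintro r ⟨f, h1, h2, rfl⟩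
      exact hgmax (⟨h1, h2⟩ : f ∈ K)
  have φg0 : g ⬝ᵥ D.mulVec g = 0 := by
    have := hgr.csSup_eq
    rw [← QEC] at this
    rw [← this, hQ]
  -- all feasible values are ≤ 0
  have hle : ∀ f : V → ℝ, (∑ x, f x) = 0 → f ⬝ᵥ D.mulVec f ≤ 0 := by
    intro f hf
    by_cases h0 : (∑ x, f x * f x) = 0
    · have hfx : ∀ x, f x = 0 := fun x => mul_self_eq_zero.mp
        ((Finset.sum_eq_zero_iff_of_nonneg (fun i _ => mul_self_nonneg (f i))).mp h0 x
          (Finset.mem_univ x))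
      have hf0 : f = fun _ => 0 := funext hfx
      rw [hf0]
      simp [dotProduct]
    · set N := ∑ x, f x * f x with hN
      have hNpos : 0 < N := lt_of_le_of_ne
        (Finset.sum_nonneg fun i _ => mul_self_nonneg (f i)) (Ne.symm h0)
      set t : ℝ := (Real.sqrt N)⁻¹ with ht
      have htt : t * t * N = 1 := by
        rw [ht, ← mul_inv]
        rw [Real.mul_self_sqrt hNpos.le]
        exact inv_mul_cancel₀ (ne_of_gt hNpos)
      have httpos : 0 < t * t := by
        have : (0:ℝ) < Real.sqrt N := Real.sqrt_pos.mpr hNpos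
        positivity
      have hmem : (t • f) ∈ K := by
        constructor
        · show (∑ x, (t * f x) * (t * f x)) = 1
          calc (∑ x, (t * f x) * (t * f x)) = t * t * ∑ x, f x * f x := by
                rw [Finset.mul_sum]; exact Finset.sum_congr rfl fun x _ => by ring
            _ = 1 := htt
        · show (∑ x, t * f x) = 0
          rw [← Finset.mul_sum, hf, mul_zero]
      have h2 : (t • f) ⬝ᵥ D.mulVec (t • f) ≤ 0 := by
        have := hgmax hmem
        simp only [Set.mem_setOf_eq] at this
        rw [φg0] at this
        exact this
      have h3 : (t • f) ⬝ᵥ D.mulVec (t • f) = (t * t) * (f ⬝ᵥ D.mulVec f) := by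
        rw [Matrix.mulVec_smul, dotProduct_smul, smul_dotProduct]
        simp [smul_eq_mul]; ring
      rw [h3] at h2
      nlinarith [httpos]
  -- orthogonality
  have horth : ∀ v : V → ℝ, (∑ x, v x) = 0 → v ⬝ᵥ D.mulVec g = 0 := by
    intro v hv
    set a := v ⬝ᵥ D.mulVec g with ha
    set bb := v ⬝ᵥ D.mulVec v with hbb
    have key2 : ∀ t : ℝ, 2 * (a * t) + bb * (t * t) ≤ 0 := by
      intro t
      have h1 : (∑ x, (g x + t * v x)) = 0 := by
        rw [Finset.sum_add_distrib, ← Finset.mul_sum, hgK.2, hv]; ring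
      have h2 := hle (fun x => g x + t * v x) h1
      have e : (fun x => g x + t * v x) = g + t • v := by
        funext x; simp [smul_eq_mul]
      rw [e] at h2
      simp only [add_dotProduct, dotProduct_add, Matrix.mulVec_add,
        Matrix.mulVec_smul, dotProduct_smul, smul_dotProduct,
        smul_eq_mul] at h2
      have hsv : g ⬝ᵥ D.mulVec v = a := dot_symm G g v
      rw [φg0] at h2
      rw [hsv] at h2
      rw [← ha, ← hbb] at h2
      linarith
    by_contra hane
    have hb : bb ≤ 0 := by
      have h1 := key2 1
      have h2 := key2 (-1)
      nlinarith
    have hb1 : (0:ℝ) < 1 - bb := by linarith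
    set ci := (1 - bb)⁻¹ with hci
    have hc : (1 - bb) * ci = 1 := mul_inv_cancel₀ (ne_of_gt hb1)
    have hcpos : 0 < ci := inv_pos.mpr hb1
    have hA : 0 < a * a := mul_self_pos.mpr hane
    have hk := key2 (a * ci)
    have hbc : bb * ci = ci - 1 := by linear_combination -hc
    have e2 : 2 * (a * (a * ci)) + bb * ((a * ci) * (a * ci))
        = a * a * ci * (1 + ci) + (bb * ci - (ci - 1)) * (a * a * ci) := by ring
    rw [e2, hbc] at hk
    simp only [sub_self, zero_mul, add_zero] at hk
    have : 0 < a * a * ci * (1 + ci) :=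
      mul_pos (mul_pos hA hcpos) (by linarith)
    linarith
  -- conclude
  set c := (∑ y, (D.mulVec g) y) / (Fintype.card V : ℝ) with hcdef
  refine ⟨g, c, hgK.1, hgK.2, fun y => ?_⟩
  have hcard : (0:ℝ) < (Fintype.card V : ℝ) := by
    have : 0 < Fintype.card V := by omega
    exact_mod_cast this
  set w : V → ℝ := fun y => (D.mulVec g) y - c with hw
  have hsw : ∑ x, w x = 0 := by
    simp only [hw, Finset.sum_sub_distrib, Finset.sum_const, Finset.card_univ,
      nsmul_eq_mul]
    rw [hcdef]
    field_simp
    ring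
  have horthw := horth w hsw
  have hcalc : w ⬝ᵥ D.mulVec g = (∑ x, w x * w x) + c * ∑ x, w x := by
    simp only [dotProduct]
    rw [Finset.mul_sum, ← Finset.sum_add_distrib]
    refine Finset.sum_congr rfl fun x _ => ?_
    have : (D.mulVec g) x = w x + c := by simp [hw]
    rw [this]; ring
  rw [hcalc, hsw, mul_zero, add_zero] at horthw
  have hwx : ∀ x, w x = 0 := fun x => mul_self_eq_zero.mp
    ((Finset.sum_eq_zero_iff_of_nonneg (fun i _ => mul_self_nonneg (w i))).mp horthw x
      (Finset.mem_univ x))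
  have := hwx y
  simp only [hw] at this
  linarith

end CoronaAux

/-- If `QEC(G) = 0` or `−2 ∈ ev(A_H)`, then `λ = 0 ∈ λ(𝒮)`: there exist
`f` with `⟨1,f⟩ = 0`, `⟨f,f⟩ = 1` and `μ ∈ ℝ` with `D f = (μ/2)1`, where `D` is the
distance matrix of `G ⊙ H`. -/
theorem zero_mem_lambdaS {V₁ V₂ : Type*} [Fintype V₁] [Fintype V₂] [DecidableEq V₂]
    (G : SimpleGraph V₁) (hG : G.Connected) (hm : 2 ≤ Fintype.card V₁)
    (H : SimpleGraph V₂) [DecidableRel H.Adj]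
    (h : QEC G = 0 ∨
      ∃ x : V₂ → ℝ, x ≠ 0 ∧ (H.adjMatrix ℝ).mulVec x = (-2 : ℝ) • x) :
    ∃ (f : V₁ × Option V₂ → ℝ) (μ : ℝ),
      (distMatrix (corona G H)).mulVec f = (μ / 2) • (fun _ => (1 : ℝ)) ∧
      (∑ p, f p) = 0 ∧ (∑ p, f p * f p) = 1 := by
  classical
  rcases h with hQ | ⟨x, hx0, hx⟩
  · -- case QEC G = 0
    obtain ⟨g, c, hg1, hg0, hrow⟩ := CoronaAux.exists_const_row G hm hQ
    refine ⟨fun p => p.2.elim (g p.1) (fun _ => 0), 2 * c, ?_, ?_, ?_⟩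
    · funext p
      obtain ⟨y, w⟩ := p
      have hfact : ∀ z : V₁, distMatrix (corona G H) (y, w) (z, none)
          = (G.dist y z : ℝ) + (if w = none then 0 else 1) := by
        intro z
        cases w with
        | none => simp [distMatrix, CoronaAux.dist_nn H hG]
        | some i =>
            simp only [distMatrix, CoronaAux.dist_sn H hG]
            push_cast
            simp
      simp only [Matrix.mulVec, dotProduct]
      rw [Fintype.sum_prod_type]
      have hz : ∀ z : V₁, (∑ u : Option V₂, distMatrix (corona G H) (y, w) (z, u) *
          (Option.elim (z, u).2 (g (z, u).1) fun _ => (0:ℝ)))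
          = (G.dist y z : ℝ) * g z + (if w = none then 0 else 1) * g z := by
        intro z
        rw [Fintype.sum_option]
        simp only [Option.elim_none, Option.elim_some, mul_zero,
          Finset.sum_const_zero, add_zero]
        rw [hfact z]; ring
      rw [Finset.sum_congr rfl fun z _ => hz z]
      rw [Finset.sum_add_distrib, ← Finset.mul_sum, hg0, mul_zero, add_zero]
      have hc : (∑ z, (G.dist y z : ℝ) * g z) = c := by
        have := hrow y
        simpa [Matrix.mulVec, dotProduct, distMatrix] using this
      rw [hc]
      simp only [Pi.smul_apply, smul_eq_mul, mul_one]
      ring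
    · rw [Fintype.sum_prod_type]
      simp only [Fintype.sum_option, Option.elim_none, Option.elim_some,
        Finset.sum_const_zero, add_zero]
      exact hg0
    · rw [Fintype.sum_prod_type]
      simp only [Fintype.sum_option, Option.elim_none, Option.elim_some, mul_zero,
        Finset.sum_const_zero, add_zero]
      exact hg1
  · -- case -2 eigenvalue
    set S := ∑ i, x i with hS
    have hxx : 0 < ∑ i, x i * x i := by
      have hex : ∃ i, x i ≠ 0 := by
        by_contra hc; push_neg at hc; exact hx0 (funext hc)
      obtain ⟨i0, hi0⟩ := hex
      exact Finset.sum_pos' (fun i _ => mul_self_nonneg _)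
        ⟨i0, Finset.mem_univ i0, mul_self_pos.mpr hi0⟩
    set N := (∑ i, x i * x i) + S * S with hN
    have hNpos : 0 < N := by nlinarith [mul_self_nonneg S]
    set m := (Fintype.card V₁ : ℝ) with hmdef
    have hmpos : 0 < m := by
      rw [hmdef]
      have : 0 < Fintype.card V₁ := by omega
      exact_mod_cast this
    have hmN : 0 < m * N := mul_pos hmpos hNpos
    set k := (Real.sqrt (m * N))⁻¹ with hk
    have hk2 : k * k * (m * N) = 1 := by
      rw [hk, ← mul_inv, Real.mul_self_sqrt hmN.le]
      exact inv_mul_cancel₀ (ne_of_gt hmN)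
    refine ⟨fun p => p.2.elim (-(k * S)) (fun i => k * x i), 2 * (m * (k * S)),
      ?_, ?_, ?_⟩
    · funext p
      obtain ⟨y, w⟩ := p
      have hAx : ∀ i, (∑ j, (H.adjMatrix ℝ) i j * x j) = -2 * x i := by
        intro i
        have := congrFun hx i
        simpa [Matrix.mulVec, dotProduct, smul_eq_mul] using this
      have hsum : ∀ a : ℝ, ∑ j, a * (k * x j) = a * (k * S) := by
        intro a
        rw [hS, Finset.mul_sum, Finset.mul_sum]
      have hcopy : ∀ z : V₁, (∑ u : Option V₂,
          distMatrix (corona G H) (y, w) (z, u) *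
            (Option.elim (z, u).2 (-(k * S)) fun i => k * x i)) = k * S := by
        intro z
        rw [Fintype.sum_option]
        simp only [Option.elim_none, Option.elim_some]
        by_cases hzy : z = y
        · subst hzy
          cases w with
          | none =>
              have h1 : distMatrix (corona G H) (z, none) (z, none) = 0 := by
                simp [distMatrix, SimpleGraph.dist_self]
              have h2 : ∀ j, distMatrix (corona G H) (z, none) (z, some j) = 1 := by
                intro j
                simp [distMatrix, CoronaAux.dist_ns H hG, SimpleGraph.dist_self]
              rw [h1]
              rw [Finset.sum_congr rfl fun j _ => by rw [h2 j]]
              simp only [one_mul, zero_mul, zero_add]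
              rw [hS, Finset.mul_sum]
          | some i =>
              have h1 : distMatrix (corona G H) (z, some i) (z, none) = 1 := by
                simp [distMatrix, CoronaAux.dist_sn H hG, SimpleGraph.dist_self]
              have h2 : ∀ j, distMatrix (corona G H) (z, some i) (z, some j)
                  = 2 - (if i = j then 2 else 0) - (if H.Adj i j then 1 else 0) := by
                intro j
                rw [distMatrix, CoronaAux.dist_ss_eq H hG]
                by_cases hij : i = j
                · subst hij; simp [H.irrefl]
                · by_cases hadj : H.Adj i j <;> simp [hij, hadj] <;> norm_num
              rw [h1]
              rw [Finset.sum_congr rfl fun j _ => by rw [h2 j]]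
              have hexp : ∀ j, (2 - (if i = j then 2 else 0) -
                  (if H.Adj i j then 1 else 0)) * (k * x j)
                  = 2 * (k * x j) - (if i = j then 2 * (k * x j) else 0)
                    - k * ((H.adjMatrix ℝ) i j * x j) := by
                intro j
                rw [SimpleGraph.adjMatrix_apply]
                split_ifs <;> ring
              rw [Finset.sum_congr rfl fun j _ => hexp j]
              rw [Finset.sum_sub_distrib, Finset.sum_sub_distrib]
              rw [hsum 2, Finset.sum_ite_eq Finset.univ i, ← Finset.mul_sum, hAx i]
              simp only [Finset.mem_univ, if_true]
              ring
        · have hyz : y ≠ z := fun hc => hzy hc.symm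
          have h1 : distMatrix (corona G H) (y, w) (z, none)
              = (G.dist y z : ℝ) + (if w = none then 0 else 1) := by
            cases w with
            | none => simp [distMatrix, CoronaAux.dist_nn H hG]
            | some i =>
                simp only [distMatrix, CoronaAux.dist_sn H hG]
                push_cast
                (try simp only [reduceIte])
                (try ring)
          have h2 : ∀ j, distMatrix (corona G H) (y, w) (z, some j)
              = (G.dist y z : ℝ) + (if w = none then 0 else 1) + 1 := by
            intro j
            cases w with
            | none =>
                simp only [distMatrix, CoronaAux.dist_ns H hG]
                push_cast
                (try simp only [reduceIte])
                (try ring)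
            | some i =>
                simp only [distMatrix, CoronaAux.dist_ss_ne H hG hyz]
                push_cast
                (try simp only [reduceIte])
                (try ring)
          rw [h1, Finset.sum_congr rfl fun j _ => by rw [h2 j]]
          rw [hsum ((G.dist y z : ℝ) + (if w = none then 0 else 1) + 1)]
          ring
      simp only [Matrix.mulVec, dotProduct]
      rw [Fintype.sum_prod_type]
      rw [Finset.sum_congr rfl fun z _ => hcopy z]
      rw [Finset.sum_const, Finset.card_univ, nsmul_eq_mul]
      simp only [Pi.smul_apply, smul_eq_mul, mul_one]
      rw [← hmdef]
      ring
    · rw [Fintype.sum_prod_type]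
      simp only [Fintype.sum_option, Option.elim_none, Option.elim_some]
      have : ∀ y : V₁, (-(k * S) + ∑ i, k * x i) = 0 := by
        intro y
        rw [← Finset.mul_sum, ← hS]
        ring
      rw [Finset.sum_congr rfl fun y _ => this y]
      simp
    · rw [Fintype.sum_prod_type]
      simp only [Fintype.sum_option, Option.elim_none, Option.elim_some]
      have hinner : ∀ y : V₁, (-(k * S) * -(k * S) + ∑ i, (k * x i) * (k * x i))
          = k * k * N := by
        intro y
        have : (∑ i, (k * x i) * (k * x i)) = k * k * ∑ i, x i * x i := by
          rw [Finset.mul_sum]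
          exact Finset.sum_congr rfl fun i _ => by ring
        rw [this, hN]
        ring
      rw [Finset.sum_congr rfl fun y _ => hinner y]
      rw [Finset.sum_const, Finset.card_univ, nsmul_eq_mul, ← hmdef]
      rw [← hk2]
      ring
end

section
/- Let G be a connected graph on m ≥ 2 vertices and H a κ-regular graph on n vertices. If QEC(G) = 0 and min ev(A_H) ≥ −2, then QEC(G⊙H) = 0; also, if QEC(G) ≤ 0 and min ev(A_H) = −2, then QEC(G⊙H) = 0. -/
open Matrix BigOperators

section Aux

variable {V₁ V₂ : Type*} (G : SimpleGraph V₁) (H : SimpleGraph V₂)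

lemma corona_adj_G {u v : V₁} (h : G.Adj u v) :
    (corona G H).Adj (u, none) (v, none) := Or.inl ⟨rfl, rfl, h⟩

lemma corona_adj_in (u : V₁) (i : V₂) :
    (corona G H).Adj (u, none) (u, some i) :=
  Or.inr ⟨rfl, Or.inr (Or.inl ⟨rfl, by simp⟩)⟩

lemma corona_adj_out (u : V₁) (i : V₂) :
    (corona G H).Adj (u, some i) (u, none) := ((corona G H).adj_symm (corona_adj_in G H u i))

lemma corona_adj_H {u : V₁} {i j : V₂} (h : H.Adj i j) :
    (corona G H).Adj (u, some i) (u, some j) :=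
  Or.inr ⟨rfl, Or.inl ⟨i, j, rfl, rfl, h⟩⟩

/-- The embedding of `G` onto the `none`-layer of the corona, as a graph hom. -/
def coronaHom : G →g corona G H where
  toFun u := (u, none)
  map_rel' h := Or.inl ⟨rfl, rfl, h⟩

variable [DecidableEq V₁] [DecidableEq V₂] [DecidableRel H.Adj]

/-- The candidate distance function on the corona. -/
noncomputable def cd (p q : V₁ × Option V₂) : ℕ :=
  G.dist p.1 q.1 +
    match p.2, q.2 with
    | none, none => 0
    | none, some _ => 1
    | some _, none => 1
    | some i, some j =>
        if p.1 = q.1 then (if i = j then 0 else if H.Adj i j then 1 else 2) else 2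

lemma cd_le_of_adj (hG : G.Connected) {p p' : V₁ × Option V₂} (q : V₁ × Option V₂)
    (h : (corona G H).Adj p p') : cd G H p q ≤ cd G H p' q + 1 := by
  obtain ⟨u, a⟩ := p
  obtain ⟨u', a'⟩ := p'
  obtain ⟨v, b⟩ := q
  have htri : ∀ x y z : V₁, G.Adj x y → G.dist x z ≤ G.dist y z + 1 := by
    intro x y z hxy
    have h1 : G.dist x z ≤ G.dist x y + G.dist y z := hG.dist_triangle
    have h2 : G.dist x y = 1 := SimpleGraph.dist_eq_one_iff_adj.mpr hxy
    omega
  rcases h with ⟨h1, h2, hadj⟩ | ⟨h1, hj⟩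
  · simp only at h1 h2 hadj
    subst h1; subst h2
    have := htri u u' v hadj
    rcases b with _ | j <;> simp only [cd] <;> omega
  · simp only at h1 hj
    subst h1
    have hd0 : G.dist u u = 0 := SimpleGraph.dist_self
    rcases hj with ⟨i, i', hi, hi', hH⟩ | ⟨ha, ha'⟩ | ⟨ha, ha'⟩
    · subst hi; subst hi'
      rcases b with _ | j
      · simp only [cd]; omega
      · simp only [cd]
        by_cases huv : u = v
        · subst huv
          simp only [if_pos rfl]
          by_cases hij : i = j
          · simp [hij]
          · by_cases hij' : i' = j
            · subst hij'
              simp [hij, hH]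
            · by_cases hA : H.Adj i j
              · simp [hij, hA]
              · have hA' : ¬ i' = j := hij'
                simp only [if_neg hij, if_neg hA, if_neg hij']
                split_ifs <;> omega
        · simp only [if_neg huv]; omega
    · subst ha
      obtain ⟨i', rfl⟩ := Option.ne_none_iff_exists'.mp ha'
      rcases b with _ | j
      · simp only [cd]; omega
      · simp only [cd]
        by_cases huv : u = v
        · subst huv
          simp only [if_pos rfl, hd0]
          split_ifs <;> omega
        · simp only [if_neg huv]; omega
    · subst ha'
      obtain ⟨i, rfl⟩ := Option.ne_none_iff_exists'.mp ha
      rcases b with _ | j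
      · simp only [cd]; omega
      · simp only [cd]
        by_cases huv : u = v
        · subst huv
          simp only [if_pos rfl, hd0]
          split_ifs <;> omega
        · simp only [if_neg huv]; omega

lemma cd_self (p : V₁ × Option V₂) : cd G H p p = 0 := by
  obtain ⟨u, _ | i⟩ := p <;> simp [cd, SimpleGraph.dist_self]

lemma cd_le_length {p q : V₁ × Option V₂} (hG : G.Connected) (w : (corona G H).Walk p q) :
    cd G H p q ≤ w.length := by
  induction w with
  | nil => exact le_of_eq (cd_self G H _)
  | cons h w ih =>
      calc cd G H _ _ ≤ cd G H _ _ + 1 := cd_le_of_adj G H hG _ h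
      _ ≤ w.length + 1 := by omega
      _ = _ := by simp

lemma exists_walk_cd (hG : G.Connected) (p q : V₁ × Option V₂) :
    ∃ w : (corona G H).Walk p q, w.length = cd G H p q := by
  obtain ⟨u, a⟩ := p
  obtain ⟨v, b⟩ := q
  obtain ⟨W, hW⟩ := hG.exists_walk_length_eq_dist u v
  let W' : (corona G H).Walk (u, none) (v, none) := W.map (coronaHom G H)
  have hW' : W'.length = G.dist u v := by
    show (W.map (coronaHom G H)).length = _
    rw [SimpleGraph.Walk.length_map]; exact hW
  rcases a with _ | i
  · rcases b with _ | j
    · exact ⟨W', by simp [cd, hW']⟩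
    · exact ⟨W'.concat (corona_adj_in G H v j), by
        simp [cd, SimpleGraph.Walk.length_concat, hW']⟩
  · rcases b with _ | j
    · exact ⟨SimpleGraph.Walk.cons (corona_adj_out G H u i) W', by
        simp [cd, hW']⟩
    · by_cases huv : u = v
      · subst huv
        by_cases hij : i = j
        · subst hij
          exact ⟨SimpleGraph.Walk.nil, by simp [cd, SimpleGraph.dist_self]⟩
        · by_cases hA : H.Adj i j
          · exact ⟨SimpleGraph.Walk.cons (corona_adj_H G H hA) SimpleGraph.Walk.nil, by
              simp [cd, SimpleGraph.dist_self, hij, hA]⟩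
          · exact ⟨SimpleGraph.Walk.cons (corona_adj_out G H u i)
                (SimpleGraph.Walk.cons (corona_adj_in G H u j) SimpleGraph.Walk.nil), by
              simp [cd, SimpleGraph.dist_self, hij, hA]⟩
      · exact ⟨SimpleGraph.Walk.cons (corona_adj_out G H u i)
            (W'.concat (corona_adj_in G H v j)), by
          simp [cd, SimpleGraph.Walk.length_concat, hW', huv]⟩

lemma corona_dist_eq (hG : G.Connected) (p q : V₁ × Option V₂) :
    (corona G H).dist p q = cd G H p q := by
  obtain ⟨w, hw⟩ := exists_walk_cd G H hG p q
  refine le_antisymm (hw ▸ SimpleGraph.dist_le w) ?_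
  obtain ⟨w', hw'⟩ := SimpleGraph.Reachable.exists_walk_length_eq_dist ⟨w⟩
  exact hw' ▸ cd_le_length G H hG w'

/-- `φ a = 0` if `a = none`, `1` otherwise. -/
def phiO : Option V₂ → ℝ := fun a => a.elim 0 (fun _ => 1)

/-- The "copy correction" kernel: `A_H + 2·I` on `some`-`some` entries, `0` otherwise. -/
def psiO : Option V₂ → Option V₂ → ℝ
  | some i, some j => (if H.Adj i j then 1 else 0) + (if i = j then 2 else 0)
  | _, _ => 0

lemma distMatrix_corona_apply (hG : G.Connected) (p q : V₁ × Option V₂) :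
    distMatrix (corona G H) p q
      = (G.dist p.1 q.1 : ℝ) + phiO p.2 + phiO q.2
        - (if p.1 = q.1 then psiO H p.2 q.2 else 0) := by
  rw [distMatrix]
  rw [corona_dist_eq G H hG]
  obtain ⟨u, a⟩ := p
  obtain ⟨v, b⟩ := q
  rcases a with _ | i <;> rcases b with _ | j
  · simp [cd, phiO, psiO]
  · simp [cd, phiO, psiO]
  · simp [cd, phiO, psiO]
  · simp only [cd, phiO, psiO, Option.elim]
    by_cases huv : u = v
    · subst huv
      simp only [if_pos rfl, SimpleGraph.dist_self]
      by_cases hij : i = j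
      · subst hij
        simp [SimpleGraph.irrefl]
        norm_num
      · by_cases hA : H.Adj i j <;> simp [hij, hA] <;> norm_num
    · simp only [if_neg huv]
      push_cast
      ring


section Sums
variable {V₁ V₂ : Type*} [Fintype V₁] [Fintype V₂] [DecidableEq V₁]

lemma sum_quad_fst (F : V₁ × Option V₂ → ℝ) (d : V₁ → V₁ → ℝ) :
    (∑ p : V₁ × Option V₂, ∑ q : V₁ × Option V₂, F p * F q * d p.1 q.1)
      = ∑ u, (∑ a, F (u, a)) * ∑ v, d u v * (∑ b, F (v, b)) := by
  simp only [Fintype.sum_prod_type]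
  refine Finset.sum_congr rfl fun u _ => ?_
  rw [Finset.sum_comm, Finset.mul_sum]
  refine Finset.sum_congr rfl fun v _ => ?_
  rw [Finset.sum_mul]
  refine Finset.sum_congr rfl fun a _ => ?_
  rw [Finset.mul_sum, Finset.mul_sum]
  exact Finset.sum_congr rfl fun b _ => by ring

lemma sum_quad_diag (F : V₁ × Option V₂ → ℝ) (ψ : Option V₂ → Option V₂ → ℝ) :
    (∑ p : V₁ × Option V₂, ∑ q : V₁ × Option V₂,
        F p * F q * (if p.1 = q.1 then ψ p.2 q.2 else 0))
      = ∑ u, ∑ a, ∑ b, F (u, a) * F (u, b) * ψ a b := by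
  simp only [Fintype.sum_prod_type, mul_ite, mul_zero]
  refine Finset.sum_congr rfl fun u _ => Finset.sum_congr rfl fun a _ => ?_
  simp only [Finset.sum_ite_irrel, Finset.sum_const_zero, Finset.sum_ite_eq,
    Finset.mem_univ, if_true]
end Sums

section Quad
variable {V₁ V₂ : Type*} [Fintype V₁] [Fintype V₂]
  (G : SimpleGraph V₁) (H : SimpleGraph V₂)
  [DecidableEq V₁] [DecidableEq V₂] [DecidableRel H.Adj]

lemma corona_quad (hG : G.Connected) {F : V₁ × Option V₂ → ℝ}
    (hsum : ∑ p, F p = 0) :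
    F ⬝ᵥ (distMatrix (corona G H)).mulVec F
      = (fun u => ∑ a, F (u, a)) ⬝ᵥ (distMatrix G).mulVec (fun u => ∑ a, F (u, a))
        - ∑ u, (fun i => F (u, some i)) ⬝ᵥ
            ((H.adjMatrix ℝ + (2:ℝ) • 1) *ᵥ (fun i => F (u, some i))) := by
  have hD := distMatrix_corona_apply G H hG
  have key : F ⬝ᵥ (distMatrix (corona G H)).mulVec F
      = (∑ p : V₁ × Option V₂, ∑ q : V₁ × Option V₂, F p * F q * (G.dist p.1 q.1 : ℝ))
        + ((∑ p : V₁ × Option V₂, ∑ q : V₁ × Option V₂, F p * F q * phiO p.2)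
        + (∑ p : V₁ × Option V₂, ∑ q : V₁ × Option V₂, F p * F q * phiO q.2))
        - (∑ p : V₁ × Option V₂, ∑ q : V₁ × Option V₂,
            F p * F q * (if p.1 = q.1 then psiO H p.2 q.2 else 0)) := by
    simp only [dotProduct, mulVec]
    rw [← Finset.sum_add_distrib, ← Finset.sum_add_distrib, ← Finset.sum_sub_distrib]
    refine Finset.sum_congr rfl fun p _ => ?_
    rw [Finset.mul_sum, ← Finset.sum_add_distrib, ← Finset.sum_add_distrib,
      ← Finset.sum_sub_distrib]
    refine Finset.sum_congr rfl fun q _ => ?_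
    rw [hD p q]
    ring
  have hT2 : (∑ p : V₁ × Option V₂, ∑ q : V₁ × Option V₂, F p * F q * phiO p.2) = 0 := by
    have h1 : ∀ p : V₁ × Option V₂, (∑ q : V₁ × Option V₂, F p * F q * phiO p.2)
        = (F p * phiO p.2) * ∑ q : V₁ × Option V₂, F q := by
      intro p; rw [Finset.mul_sum]; exact Finset.sum_congr rfl fun q _ => by ring
    simp [h1, hsum]
  have hT3 : (∑ p : V₁ × Option V₂, ∑ q : V₁ × Option V₂, F p * F q * phiO q.2) = 0 := by
    have h1 : ∀ p : V₁ × Option V₂, (∑ q : V₁ × Option V₂, F p * F q * phiO q.2)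
        = F p * (∑ q : V₁ × Option V₂, F q * phiO q.2) := by
      intro p; rw [Finset.mul_sum]; exact Finset.sum_congr rfl fun q _ => by ring
    simp only [h1]
    rw [← Finset.sum_mul, hsum, zero_mul]
  have hT1 : (∑ p : V₁ × Option V₂, ∑ q : V₁ × Option V₂, F p * F q * (G.dist p.1 q.1 : ℝ))
      = (fun u => ∑ a, F (u, a)) ⬝ᵥ (distMatrix G).mulVec (fun u => ∑ a, F (u, a)) := by
    rw [sum_quad_fst F (fun u v => (G.dist u v : ℝ))]
    simp only [dotProduct, mulVec, distMatrix]
  have hT4 : (∑ p : V₁ × Option V₂, ∑ q : V₁ × Option V₂,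
        F p * F q * (if p.1 = q.1 then psiO H p.2 q.2 else 0))
      = ∑ u, (fun i => F (u, some i)) ⬝ᵥ
          ((H.adjMatrix ℝ + (2:ℝ) • 1) *ᵥ (fun i => F (u, some i))) := by
    rw [sum_quad_diag F (psiO H)]
    refine Finset.sum_congr rfl fun u _ => ?_
    simp only [dotProduct, mulVec, Fintype.sum_option, psiO, Matrix.add_apply,
      Matrix.smul_apply, Matrix.one_apply, SimpleGraph.adjMatrix_apply, smul_eq_mul,
      mul_zero, zero_mul, Finset.sum_const_zero, add_zero, zero_add]
    refine Finset.sum_congr rfl fun i _ => ?_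
    rw [Finset.mul_sum]
    refine Finset.sum_congr rfl fun j _ => ?_
    split_ifs <;> ring
  rw [key, hT1, hT2, hT3, hT4]
  ring

end Quad

section Spectral
variable {V : Type*} [Fintype V]

lemma dist_le_card (G : SimpleGraph V) (u v : V) : G.dist u v ≤ Fintype.card V := by
  classical
  by_cases hr : G.Reachable u v
  · obtain ⟨w, hw⟩ := hr.exists_walk_length_eq_dist
    have h1 : G.dist u v ≤ w.bypass.length := SimpleGraph.dist_le _
    have h2 : w.bypass.length < Fintype.card V := w.bypass_isPath.length_lt
    omega
  · simp [SimpleGraph.dist_eq_zero_of_not_reachable hr]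

/-- The defining set for `QEC`. -/
def QECset (G : SimpleGraph V) : Set ℝ :=
  {r : ℝ | ∃ f : V → ℝ, (∑ x, f x * f x) = 1 ∧ (∑ x, f x) = 0 ∧
    r = f ⬝ᵥ (distMatrix G).mulVec f}

lemma QEC_eq_sSup (G : SimpleGraph V) : QEC G = sSup (QECset G) := rfl

lemma bddAbove_QECset (G : SimpleGraph V) : BddAbove (QECset G) := by
  classical
  refine ⟨(Fintype.card V : ℝ) * (Fintype.card V : ℝ), fun r hr => ?_⟩
  obtain ⟨f, hf1, _, rfl⟩ := hr
  have habs : ∀ u v : V, f u * ((G.dist u v : ℝ) * f v)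
      ≤ |f u| * ((Fintype.card V : ℝ) * |f v|) := by
    intro u v
    calc f u * ((G.dist u v : ℝ) * f v) ≤ |f u * ((G.dist u v : ℝ) * f v)| := le_abs_self _
    _ = |f u| * ((G.dist u v : ℝ) * |f v|) := by
        rw [abs_mul, abs_mul, abs_of_nonneg (by positivity : (0:ℝ) ≤ (G.dist u v : ℝ))]
    _ ≤ |f u| * ((Fintype.card V : ℝ) * |f v|) := by
        have hcd : (G.dist u v : ℝ) ≤ (Fintype.card V : ℝ) := by
          exact_mod_cast dist_le_card G u v
        exact mul_le_mul_of_nonneg_left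
          (mul_le_mul_of_nonneg_right hcd (abs_nonneg _)) (abs_nonneg _)
  calc f ⬝ᵥ (distMatrix G).mulVec f
      = ∑ u, ∑ v, f u * ((G.dist u v : ℝ) * f v) := by
        simp only [dotProduct, mulVec, distMatrix, Finset.mul_sum]
    _ ≤ ∑ u, ∑ v, |f u| * ((Fintype.card V : ℝ) * |f v|) :=
        Finset.sum_le_sum fun u _ => Finset.sum_le_sum fun v _ => habs u v
    _ = (Fintype.card V : ℝ) * (∑ u, |f u|) ^ 2 := by
        have h1 : ∀ u : V, (∑ v, |f u| * ((Fintype.card V : ℝ) * |f v|))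
            = |f u| * ((Fintype.card V : ℝ) * ∑ v, |f v|) := by
          intro u; rw [← Finset.mul_sum, ← Finset.mul_sum]
        simp only [h1]
        rw [← Finset.sum_mul]
        ring
    _ ≤ (Fintype.card V : ℝ) * ((Fintype.card V : ℝ) * ∑ u, |f u| ^ 2) := by
        have h2 := sq_sum_le_card_mul_sum_sq (s := Finset.univ) (f := fun u : V => |f u|)
        refine mul_le_mul_of_nonneg_left ?_ (by positivity)
        simpa using h2
    _ = (Fintype.card V : ℝ) * (Fintype.card V : ℝ) := by
        have h3 : (∑ u, |f u| ^ 2) = 1 := by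
          rw [← hf1]
          exact Finset.sum_congr rfl fun u _ => by rw [sq_abs, sq]
        rw [h3, mul_one]

/-- Any vector summing to zero has Rayleigh quotient at most `QEC`. -/
lemma quad_le_QEC (G : SimpleGraph V) (c : V → ℝ) (hc : (∑ u, c u) = 0) :
    c ⬝ᵥ (distMatrix G).mulVec c ≤ QEC G * (∑ u, c u * c u) := by
  have hN0 : 0 ≤ ∑ u, c u * c u := Finset.sum_nonneg fun u _ => mul_self_nonneg _
  rcases eq_or_lt_of_le hN0 with hzero | hpos
  · have hall : ∀ u : V, c u = 0 := fun u => mul_self_eq_zero.mp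
      ((Finset.sum_eq_zero_iff_of_nonneg
        (fun u _ => mul_self_nonneg (c u))).mp hzero.symm u (Finset.mem_univ u))
    have hc0 : c = 0 := funext hall
    simp [hc0]
  · set N : ℝ := ∑ u, c u * c u with hN
    have hNne : N ≠ 0 := ne_of_gt hpos
    have hsq : Real.sqrt N * Real.sqrt N = N := Real.mul_self_sqrt (le_of_lt hpos)
    have hsne : Real.sqrt N ≠ 0 := ne_of_gt (Real.sqrt_pos.mpr hpos)
    set f : V → ℝ := fun u => c u / Real.sqrt N with hf
    have hf1 : (∑ x, f x * f x) = 1 := by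
      have h1 : ∀ x : V, f x * f x = c x * c x / N := by
        intro x
        simp only [hf]
        rw [div_mul_div_comm, hsq]
      simp only [h1]
      rw [← Finset.sum_div, ← hN, div_self hNne]
    have hf2 : (∑ x, f x) = 0 := by
      simp only [hf, div_eq_mul_inv, ← Finset.sum_mul, hc, zero_mul]
    have hmem : f ⬝ᵥ (distMatrix G).mulVec f ∈ QECset G := ⟨f, hf1, hf2, rfl⟩
    have hle : f ⬝ᵥ (distMatrix G).mulVec f ≤ QEC G :=
      le_csSup (bddAbove_QECset G) hmem
    have hquad : f ⬝ᵥ (distMatrix G).mulVec f = (c ⬝ᵥ (distMatrix G).mulVec c) / N := by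
      have hterm : ∀ u v : V, f u * (distMatrix G u v * f v)
          = c u * (distMatrix G u v * c v) / N := by
        intro u v
        simp only [hf]
        conv_rhs => rw [← hsq]
        field_simp
      simp only [dotProduct, mulVec, Finset.mul_sum, hterm]
      have h2 : ∀ u : V, (∑ v, c u * (distMatrix G u v * c v) / N)
          = (∑ v, c u * (distMatrix G u v * c v)) / N := fun u => (Finset.sum_div _ _ _).symm
      simp only [h2]
      exact (Finset.sum_div _ _ _).symm
    rw [hquad, div_le_iff₀ hpos] at hle
    exact hle
end Spectral

section PSD
variable {V₂ : Type*} [Fintype V₂] [DecidableEq V₂] (H : SimpleGraph V₂) [DecidableRel H.Adj]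

lemma M_isHermitian : (H.adjMatrix ℝ + (2:ℝ) • 1).IsHermitian := by
  have h1 : (H.adjMatrix ℝ).IsHermitian := by
    rw [Matrix.IsHermitian, Matrix.conjTranspose_eq_transpose_of_trivial,
      SimpleGraph.transpose_adjMatrix]
  have h2 : ((2:ℝ) • (1 : Matrix V₂ V₂ ℝ)).IsHermitian := by
    rw [Matrix.IsHermitian, Matrix.conjTranspose_smul, Matrix.conjTranspose_one]
    norm_num
  exact h1.add h2

lemma M_posSemidef {μmin : ℝ}
    (hmin2 : ∀ θ : ℝ, (∃ x : V₂ → ℝ, x ≠ 0 ∧ (H.adjMatrix ℝ).mulVec x = θ • x) → μmin ≤ θ)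
    (hμ : -2 ≤ μmin) : (H.adjMatrix ℝ + (2:ℝ) • 1).PosSemidef := by
  have hherm := M_isHermitian H
  apply (Matrix.IsHermitian.posSemidef_iff_eigenvalues_nonneg hherm).mpr
  intro i
  have hv := hherm.mulVec_eigenvectorBasis i
  set v : V₂ → ℝ := ⇑(hherm.eigenvectorBasis i) with hvdef
  have hb1 : ‖hherm.eigenvectorBasis i‖ = 1 := hherm.eigenvectorBasis.orthonormal.1 i
  have hv0 : v ≠ 0 := by
    intro h0
    rw [EuclideanSpace.norm_eq] at hb1
    have : ∀ x : V₂, hherm.eigenvectorBasis i x = 0 := fun x => congrFun h0 x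
    simp only [this] at hb1
    norm_num at hb1
  have hAv : (H.adjMatrix ℝ).mulVec v = (hherm.eigenvalues i - 2) • v := by
    have h2 : (H.adjMatrix ℝ + (2:ℝ) • 1) *ᵥ v = hherm.eigenvalues i • v := hv
    rw [Matrix.add_mulVec, Matrix.smul_mulVec, Matrix.one_mulVec] at h2
    have h3 : (H.adjMatrix ℝ) *ᵥ v = hherm.eigenvalues i • v - (2:ℝ) • v :=
      eq_sub_of_add_eq h2
    rw [h3, sub_smul]
  have hle := hmin2 (hherm.eigenvalues i - 2) ⟨v, hv0, hAv⟩
  show (0:ℝ) ≤ _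
  linarith

lemma quad_M_nonneg {μmin : ℝ}
    (hmin2 : ∀ θ : ℝ, (∃ x : V₂ → ℝ, x ≠ 0 ∧ (H.adjMatrix ℝ).mulVec x = θ • x) → μmin ≤ θ)
    (hμ : -2 ≤ μmin) (x : V₂ → ℝ) :
    0 ≤ x ⬝ᵥ ((H.adjMatrix ℝ + (2:ℝ) • 1) *ᵥ x) := by
  have := (M_posSemidef H hmin2 hμ).dotProduct_mulVec_nonneg x
  simpa using this

lemma eigvec_sum_zero {κ : ℕ} (hreg : H.IsRegularOfDegree κ) {x : V₂ → ℝ}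
    (hx : (H.adjMatrix ℝ).mulVec x = (-2 : ℝ) • x) : (∑ i, x i) = 0 := by
  have h1 : ∑ v, ((H.adjMatrix ℝ).mulVec x) v = -2 * ∑ i, x i := by
    rw [hx]
    simp [Finset.mul_sum]
  have h2 : ∑ v, ((H.adjMatrix ℝ).mulVec x) v = (κ : ℝ) * ∑ i, x i := by
    simp only [mulVec, dotProduct]
    rw [Finset.sum_comm]
    have hcol : ∀ j : V₂, (∑ v, H.adjMatrix ℝ v j) = (κ : ℝ) := by
      intro j
      have hsymm : ∀ v, H.adjMatrix ℝ v j = H.adjMatrix ℝ j v := by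
        intro v
        simp only [SimpleGraph.adjMatrix_apply]
        simp only [show H.Adj v j ↔ H.Adj j v from H.adj_comm v j]
      rw [Finset.sum_congr rfl fun v _ => hsymm v]
      have := SimpleGraph.adjMatrix_mulVec_const_apply_of_regular (α := ℝ) (a := (1:ℝ))
        hreg (v := j)
      simp only [mulVec, dotProduct, Function.const, mul_one] at this; exact this
    calc ∑ j, ∑ v, H.adjMatrix ℝ v j * x j
        = ∑ j, (∑ v, H.adjMatrix ℝ v j) * x j := by
          refine Finset.sum_congr rfl fun j _ => (Finset.sum_mul _ _ _).symm
      _ = ∑ j, (κ:ℝ) * x j := by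
          refine Finset.sum_congr rfl fun j _ => by rw [hcol j]
      _ = (κ:ℝ) * ∑ j, x j := by rw [Finset.mul_sum]
  have h3 : ((κ:ℝ) + 2) * (∑ i, x i) = 0 := by
    rw [h2] at h1
    linarith
  have hκ : ((κ:ℝ) + 2) ≠ 0 := by positivity
  exact (mul_eq_zero.mp h3).resolve_left hκ

end PSD

section Nonempty
variable {V : Type*} [Fintype V]

lemma QECset_nonempty (G : SimpleGraph V) (hm : 2 ≤ Fintype.card V) :
    (QECset G).Nonempty := by
  classical
  obtain ⟨u, v, huv⟩ := Fintype.exists_pair_of_one_lt_card (α := V) (by omega)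
  set a : ℝ := (Real.sqrt 2)⁻¹ with ha
  have ha2 : a * a = 1/2 := by
    rw [ha, ← mul_inv, Real.mul_self_sqrt (by norm_num : (0:ℝ) ≤ 2)]
    norm_num
  set f : V → ℝ := fun x => if x = u then a else if x = v then -a else 0 with hfdef
  refine ⟨_, f, ?_, ?_, rfl⟩
  · have hval : ∀ x : V, f x * f x
        = (if x = u then a * a else 0) + (if x = v then a * a else 0) := by
      intro x
      by_cases h1 : x = u
      · have h2 : ¬ x = v := fun hv => huv (h1.symm.trans hv)
        simp [hfdef, h1, h2, huv]
      · by_cases h2 : x = v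
        · simp [hfdef, h1, h2, Ne.symm huv]
          try ring
        · simp [hfdef, h1, h2]
    rw [Finset.sum_congr rfl fun x _ => hval x, Finset.sum_add_distrib]
    simp only [Finset.sum_ite_eq', Finset.mem_univ, if_true]
    rw [ha2]
    norm_num
  · have hval : ∀ x : V, f x = (if x = u then a else 0) + (if x = v then -a else 0) := by
      intro x
      by_cases h1 : x = u
      · have h2 : ¬ x = v := fun hv => huv (h1.symm.trans hv)
        simp [hfdef, h1, h2, huv]
      · by_cases h2 : x = v
        · simp [hfdef, h1, h2, Ne.symm huv]
        · simp [hfdef, h1, h2]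
    rw [Finset.sum_congr rfl fun x _ => hval x, Finset.sum_add_distrib]
    simp only [Finset.sum_ite_eq', Finset.mem_univ, if_true]
    ring

end Nonempty

end Aux


/-- If `QEC(G) = 0` and `min ev(A_H) ≥ −2`, then `QEC(G⊙H) = 0`;
also, if `QEC(G) ≤ 0` and `min ev(A_H) = −2`, then `QEC(G⊙H) = 0`. -/
theorem qec_corona_eq_zero {V₁ V₂ : Type*} [Fintype V₁] [Fintype V₂] [DecidableEq V₂]
    (G : SimpleGraph V₁) (hG : G.Connected) (hm : 2 ≤ Fintype.card V₁)
    (H : SimpleGraph V₂) [DecidableRel H.Adj] (κ : ℕ) (hreg : H.IsRegularOfDegree κ)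
    (μmin : ℝ)
    (hmin1 : ∃ x : V₂ → ℝ, x ≠ 0 ∧ (H.adjMatrix ℝ).mulVec x = μmin • x)
    (hmin2 : ∀ θ : ℝ, (∃ x : V₂ → ℝ, x ≠ 0 ∧ (H.adjMatrix ℝ).mulVec x = θ • x) → μmin ≤ θ)
    (h : (QEC G = 0 ∧ -2 ≤ μmin) ∨ (QEC G ≤ 0 ∧ μmin = -2)) :
    QEC (corona G H) = 0 := by
  classical
  have hQ : QEC G ≤ 0 := by
    rcases h with ⟨h1, _⟩ | ⟨h1, _⟩
    · exact le_of_eq h1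
    · exact h1
  have hμ : -2 ≤ μmin := by
    rcases h with ⟨_, h2⟩ | ⟨_, h2⟩
    · exact h2
    · exact le_of_eq h2.symm
  -- Upper bound: every admissible value for the corona is ≤ 0.
  have hub : ∀ r ∈ QECset (corona G H), r ≤ 0 := by
    rintro r ⟨F, hF1, hF2, rfl⟩
    rw [corona_quad G H hG hF2]
    have hcsum : (∑ u, ∑ a, F (u, a)) = 0 := by
      rw [← Fintype.sum_prod_type]
      exact hF2
    have h1 : (fun u => ∑ a, F (u, a)) ⬝ᵥ
        (distMatrix G).mulVec (fun u => ∑ a, F (u, a)) ≤ 0 := by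
      have hq := quad_le_QEC G (fun u => ∑ a, F (u, a)) hcsum
      have hN : 0 ≤ ∑ u, (∑ a, F (u, a)) * (∑ a, F (u, a)) :=
        Finset.sum_nonneg fun u _ => mul_self_nonneg _
      exact hq.trans (mul_nonpos_of_nonpos_of_nonneg hQ hN)
    have h2 : 0 ≤ ∑ u, (fun i => F (u, some i)) ⬝ᵥ
        ((H.adjMatrix ℝ + (2:ℝ) • 1) *ᵥ (fun i => F (u, some i))) :=
      Finset.sum_nonneg fun u _ => quad_M_nonneg H hmin2 hμ _
    linarith
  have hbdd : BddAbove (QECset (corona G H)) := ⟨0, hub⟩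
  rcases h with ⟨hQ0, _⟩ | ⟨_, hμ2⟩
  · -- Case 1 : QEC G = 0.
    have hsub : QECset G ⊆ QECset (corona G H) := by
      rintro r ⟨f, hf1, hf2, rfl⟩
      set F : V₁ × Option V₂ → ℝ := fun p => p.2.elim (f p.1) (fun _ => 0) with hFdef
      have hFsum : ∑ p, F p = 0 := by
        rw [Fintype.sum_prod_type]
        simpa [hFdef, Fintype.sum_option] using hf2
      refine ⟨F, ?_, hFsum, ?_⟩
      · rw [Fintype.sum_prod_type]
        simpa [hFdef, Fintype.sum_option] using hf1
      · rw [corona_quad G H hG hFsum]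
        have hc : (fun u => ∑ a, F (u, a)) = f := by
          funext u
          simp [hFdef, Fintype.sum_option]
        have hh : ∀ u : V₁, (fun i => F (u, some i)) = (0 : V₂ → ℝ) := by
          intro u
          funext i
          simp [hFdef]
        rw [hc]
        have : ∀ u : V₁, (fun i => F (u, some i)) ⬝ᵥ
            ((H.adjMatrix ℝ + (2:ℝ) • 1) *ᵥ (fun i => F (u, some i))) = 0 := by
          intro u
          rw [hh u]
          simp
        simp only [this, Finset.sum_const_zero, sub_zero]
    have hcs : sSup (QECset G) ≤ sSup (QECset (corona G H)) :=
      csSup_le_csSup hbdd (QECset_nonempty G hm) hsub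
    have hge : (0:ℝ) ≤ sSup (QECset (corona G H)) := by
      calc (0:ℝ) = QEC G := hQ0.symm
        _ = sSup (QECset G) := QEC_eq_sSup G
        _ ≤ _ := hcs
    have hne : (QECset (corona G H)).Nonempty := (QECset_nonempty G hm).mono hsub
    rw [QEC_eq_sSup]
    exact le_antisymm (csSup_le hne hub) hge
  · -- Case 2 : μmin = -2.
    obtain ⟨x, hx0, hxe⟩ := hmin1
    rw [hμ2] at hxe
    have hxsum : (∑ i, x i) = 0 := eigvec_sum_zero H hreg hxe
    have hMx : (H.adjMatrix ℝ + (2:ℝ) • 1) *ᵥ x = 0 := by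
      rw [Matrix.add_mulVec, hxe, Matrix.smul_mulVec, Matrix.one_mulVec]
      funext i
      simp
    have hN0 : 0 < ∑ i, x i * x i := by
      obtain ⟨i0, hi0⟩ := Function.ne_iff.mp hx0
      exact Finset.sum_pos' (fun i _ => mul_self_nonneg _)
        ⟨i0, Finset.mem_univ _, mul_self_pos.mpr hi0⟩
    set N : ℝ := ∑ i, x i * x i with hNdef
    have hsq : Real.sqrt N * Real.sqrt N = N := Real.mul_self_sqrt (le_of_lt hN0)
    have hsne : Real.sqrt N ≠ 0 := ne_of_gt (Real.sqrt_pos.mpr hN0)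
    have hV₁ : Nonempty V₁ := Fintype.card_pos_iff.mp (by omega)
    obtain ⟨u₀⟩ := hV₁
    set F : V₁ × Option V₂ → ℝ :=
      fun p => p.2.elim 0 (fun i => (if p.1 = u₀ then (Real.sqrt N)⁻¹ else 0) * x i)
      with hFdef
    have hrow : ∀ u : V₁, (fun i => F (u, some i))
        = (if u = u₀ then (Real.sqrt N)⁻¹ else 0) • x := by
      intro u
      funext i
      simp [hFdef]
    have hFsum : ∑ p, F p = 0 := by
      rw [Fintype.sum_prod_type]
      have h1 : ∀ u : V₁, (∑ a : Option V₂, F (u, a))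
          = if u = u₀ then (Real.sqrt N)⁻¹ * ∑ i, x i else 0 := by
        intro u
        by_cases hu : u = u₀ <;>
          simp [hFdef, Fintype.sum_option, hu, Finset.mul_sum]
      simp only [h1]
      rw [Finset.sum_ite_eq' Finset.univ u₀]
      simp [hxsum]
    have hF1 : ∑ p, F p * F p = 1 := by
      rw [Fintype.sum_prod_type]
      have h1 : ∀ u : V₁, (∑ a : Option V₂, F (u, a) * F (u, a))
          = if u = u₀ then ∑ i, x i * x i / N else 0 := by
        intro u
        by_cases hu : u = u₀
        · simp only [hFdef, Fintype.sum_option, hu, if_pos rfl, Option.elim]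
          simp only [mul_zero, zero_mul, zero_add]
          refine Finset.sum_congr rfl fun i _ => ?_
          simp only [eq_self_iff_true, if_true]
          conv_rhs => rw [← hsq]
          field_simp
        · simp [hFdef, Fintype.sum_option, hu]
      simp only [h1]
      rw [Finset.sum_ite_eq' Finset.univ u₀]
      simp only [Finset.mem_univ, if_true]
      rw [← Finset.sum_div, ← hNdef, div_self (ne_of_gt hN0)]
    have hval : F ⬝ᵥ (distMatrix (corona G H)).mulVec F = 0 := by
      rw [corona_quad G H hG hFsum]
      have hc : (fun u => ∑ a, F (u, a)) = (0 : V₁ → ℝ) := by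
        funext u
        by_cases hu : u = u₀
        · simp only [hFdef, Fintype.sum_option, hu, if_pos rfl, Option.elim, zero_add,
            Pi.zero_apply]
          rw [← Finset.mul_sum, hxsum, mul_zero]
        · simp [hFdef, Fintype.sum_option, hu]
      have hterm : ∀ u : V₁, (fun i => F (u, some i)) ⬝ᵥ
          ((H.adjMatrix ℝ + (2:ℝ) • 1) *ᵥ (fun i => F (u, some i))) = 0 := by
        intro u
        rw [hrow u, Matrix.mulVec_smul, hMx]
        simp
      rw [hc]
      simp only [hterm, Finset.sum_const_zero, sub_zero]
      simp
    have hmem : (0:ℝ) ∈ QECset (corona G H) := ⟨F, hF1, hFsum, hval.symm⟩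
    rw [QEC_eq_sSup]
    exact le_antisymm (csSup_le ⟨0, hmem⟩ hub) (le_csSup hbdd hmem)
end
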